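/- For every natural number n ≥ 2 there exists a functor F from the category of nonempty sets of cardinality at most n to the category of nonempty sets of cardinality at most 2 that is not isomorphic to any constant functor. -/

import Mathlib

open CategoryTheory

attribute [local instance] Classical.propDecidable

/-- Auxiliary: if `g ∘ f` is bijective with `#X = n`, `#Y ≤ n`, `#Z = n`, then both
`f` and `g` are bijective and `#Y = n`. -/
lemma stmt_9_key {n : ℕ} {X Y Z : Type} (f : X → Y) (g : Y → Z)
    (hX : Cardinal.mk X = n) (hY : Cardinal.mk Y ≤ n) (hZ : Cardinal.mk Z = n)
    (h : Function.Bijective (g ∘ f)) :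
    (Cardinal.mk Y = n ∧ Function.Bijective f) ∧
      (Cardinal.mk Z = n ∧ Function.Bijective g) := by
  have hfinY : Finite Y := Cardinal.lt_aleph0_iff_finite.mp
    (lt_of_le_of_lt hY (Cardinal.nat_lt_aleph0 n))
  have hfinj : Function.Injective f := Function.Injective.of_comp h.injective
  have hmkY : Cardinal.mk Y = n :=
    le_antisymm hY (hX ▸ Cardinal.mk_le_of_injective hfinj)
  have hcXY : Nat.card X = Nat.card Y := by unfold Nat.card; rw [hX, hmkY]
  have hcYZ : Nat.card Y = Nat.card Z := by unfold Nat.card; rw [hmkY, hZ]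
  have hfbij : Function.Bijective f :=
    (Nat.bijective_iff_injective_and_card f).mpr ⟨hfinj, hcXY⟩
  have hgsurj : Function.Surjective g := Function.Surjective.of_comp h.surjective
  have hgbij : Function.Bijective g :=
    (Nat.bijective_iff_surjective_and_card g).mpr ⟨hgsurj, hcYZ⟩
  exact ⟨⟨hmkY, hfbij⟩, ⟨hZ, hgbij⟩⟩

/-- The underlying map of the functor. -/
noncomputable def stmt_9_map (n : ℕ) {X Y : Type} (f : X → Y)
    (a : Option (PLift (Cardinal.mk X = n))) : Option (PLift (Cardinal.mk Y = n)) :=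
  a.bind fun _ =>
    if h : Cardinal.mk Y = n ∧ Function.Bijective f then some ⟨h.1⟩ else none

lemma stmt_9_map_none (n : ℕ) {X Y : Type} (f : X → Y) :
    stmt_9_map n f none = none := rfl

lemma stmt_9_map_some_pos (n : ℕ) {X Y : Type} (f : X → Y)
    (h : Cardinal.mk Y = n ∧ Function.Bijective f) (hX : PLift (Cardinal.mk X = n)) :
    stmt_9_map n f (some hX) = some ⟨h.1⟩ := by
  unfold stmt_9_map
  rw [Option.bind_some, dif_pos h]

lemma stmt_9_map_some_neg (n : ℕ) {X Y : Type} (f : X → Y)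
    (h : ¬ (Cardinal.mk Y = n ∧ Function.Bijective f)) (hX : PLift (Cardinal.mk X = n)) :
    stmt_9_map n f (some hX) = none := by
  unfold stmt_9_map
  rw [Option.bind_some, dif_neg h]

/-- The functor: `X ↦ Option (PLift (#X = n))`; a map is sent to the "identity-like"
map iff it is a bijection onto a set of cardinality `n`, else to the constant `none`. -/
noncomputable def stmt_9_F (n : ℕ) :
    ObjectProperty.FullSubcategory (fun X : Type => Nonempty X ∧ Cardinal.mk X ≤ n) ⥤
      ObjectProperty.FullSubcategory (fun X : Type => Nonempty X ∧ Cardinal.mk X ≤ 2) where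
  obj X := ⟨Option (PLift (Cardinal.mk X.obj = n)), ⟨none⟩, by
    rw [Cardinal.mk_option]
    have h1 : Cardinal.mk (PLift (Cardinal.mk X.obj = n)) ≤ 1 :=
      Cardinal.le_one_iff_subsingleton.mpr inferInstance
    calc Cardinal.mk (PLift (Cardinal.mk X.obj = n)) + 1 ≤ 1 + 1 := add_le_add_left h1 1
      _ = ((2 : ℕ) : Cardinal) := by norm_num⟩
  map {X Y} f := ObjectProperty.homMk (TypeCat.ofHom (stmt_9_map n f))
  map_id X := by
    apply ObjectProperty.hom_ext; apply TypeCat.Hom.ext; apply TypeCat.Fun.ext; funext a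
    show stmt_9_map n (𝟙 X) a = a
    cases a with
    | none => rfl
    | some hX =>
      rw [stmt_9_map_some_pos n (𝟙 X) ⟨hX.down, Function.bijective_id⟩ hX]
  map_comp {X Y Z} f g := by
    apply ObjectProperty.hom_ext; apply TypeCat.Hom.ext; apply TypeCat.Fun.ext; funext a
    show stmt_9_map n (f ≫ g) a = stmt_9_map n g (stmt_9_map n f a)
    cases a with
    | none => rfl
    | some hX =>
      by_cases hc : Cardinal.mk Z.obj = n ∧ Function.Bijective (f ≫ g : X.obj → Z.obj)
      · obtain ⟨⟨h1, h2⟩, ⟨h3, h4⟩⟩ := stmt_9_key f g hX.down Y.property.2 hc.1 hc.2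
        rw [stmt_9_map_some_pos n _ hc hX, stmt_9_map_some_pos n f ⟨h1, h2⟩ hX,
          stmt_9_map_some_pos n g ⟨h3, h4⟩]
      · rw [stmt_9_map_some_neg n _ hc hX]
        by_cases hf : Cardinal.mk Y.obj = n ∧ Function.Bijective f
        · rw [stmt_9_map_some_pos n f hf hX,
            stmt_9_map_some_neg n g (fun hg => hc ⟨hg.1, hg.2.comp hf.2⟩)]
        · rw [stmt_9_map_some_neg n f hf hX, stmt_9_map_none]

theorem stmt_9 (n : ℕ) (hn : 2 ≤ n) :
    ∃ F : ObjectProperty.FullSubcategory (fun X : Type => Nonempty X ∧ Cardinal.mk X ≤ n) ⥤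
          ObjectProperty.FullSubcategory (fun X : Type => Nonempty X ∧ Cardinal.mk X ≤ 2),
      ∀ d, IsEmpty (F ≅
        (Functor.const (ObjectProperty.FullSubcategory (fun X : Type => Nonempty X ∧ Cardinal.mk X ≤ n))).obj d) := by
  refine ⟨stmt_9_F n, fun d => ⟨fun e => ?_⟩⟩
  -- the object `Fin n`
  set A : ObjectProperty.FullSubcategory (fun X : Type => Nonempty X ∧ Cardinal.mk X ≤ n) :=
    ⟨Fin n, ⟨⟨0, by omega⟩⟩, by rw [Cardinal.mk_fin]⟩ with hA
  -- the constant endomorphism of `Fin n`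
  let f : A ⟶ A := ObjectProperty.homMk (TypeCat.ofHom fun _ => (⟨0, by omega⟩ : Fin n))
  have hnat := e.hom.naturality f
  have hid : (stmt_9_F n).map f = 𝟙 ((stmt_9_F n).obj A) := by
    have heq : (stmt_9_F n).map f ≫ e.hom.app A = 𝟙 ((stmt_9_F n).obj A) ≫ e.hom.app A := by
      rw [hnat]; simp
    exact (cancel_mono (e.hom.app A)).mp heq
  have hAcard : Cardinal.mk A.obj = n := Cardinal.mk_fin n
  have hev := congrArg (fun g : (stmt_9_F n).obj A ⟶ (stmt_9_F n).obj A => g.hom (some ⟨hAcard⟩)) hid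
  have hnotbij : ¬ Function.Bijective f := by
    intro hb
    have h01 : f ⟨0, by omega⟩ = f ⟨1, by omega⟩ := rfl
    have h2 := @hb.1 (⟨0, by omega⟩ : Fin n) (⟨1, by omega⟩ : Fin n) h01
    exact absurd (congrArg Fin.val h2) (by simp)
  have hval : ((stmt_9_F n).map f).hom (some ⟨hAcard⟩) = none := by
    show stmt_9_map n f (some ⟨hAcard⟩) = none
    exact stmt_9_map_some_neg n f (fun h => hnotbij h.2) _
  rw [hval] at hev
  exact Option.some_ne_none _ (hev : none = some (⟨hAcard⟩ : PLift (Cardinal.mk A.obj = n))).symm
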